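/- Let p ≥ 3 be a real number, μ a probability measure on S, f : S → ℝ measurable with f ≥ 1 and ∫ f dμ ≤ p+1. Suppose S = A ⊔ B with μ(A) = μ(B) = 1/2; on A, f(s) ∈ {1} or f(s) ≥ p^2 (with f(s) = p excluded); on B, f(s) = p or f(s) ≥ p^3. Let x0 = μ({s ∈ A : f(s) = 1}) and x1 = μ({s ∈ B : f(s) = p}). Then x0 + x1 ≥ (2p - 3)/(2p - 2). -/

import Mathlib

open MeasureTheory

/-- With equidistributed parities: half the family (set `A`) has Selmer order 1 or at
least `p^2`, half (set `B`) has Selmer order `p` or at least `p^3`, and the average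
order is at most `p + 1`. Then the combined density of order 1 in `A` and order `p` in
`B` is at least `(2p - 3)/(2p - 2)`. -/
theorem stmt4 {S : Type*} [MeasurableSpace S] (μ : Measure S) [IsProbabilityMeasure μ]
    (p : ℝ) (hp : 3 ≤ p)
    (f : S → ℝ) (hf : Measurable f) (hfi : Integrable f μ)
    (hf1 : ∀ s, 1 ≤ f s)
    (havg : ∫ s, f s ∂μ ≤ p + 1)
    (A B : Set S) (hA : MeasurableSet A) (hB : MeasurableSet B)
    (hdisj : Disjoint A B) (hcover : A ∪ B = Set.univ)
    (hμA : μ A = 1/2) (hμB : μ B = 1/2)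
    (hfA : ∀ s ∈ A, f s = 1 ∨ p ^ 2 ≤ f s)
    (hfB : ∀ s ∈ B, f s = p ∨ p ^ 3 ≤ f s) :
    ENNReal.ofReal ((2 * p - 3) / (2 * p - 2)) ≤
      μ {s ∈ A | f s = 1} + μ {s ∈ B | f s = p} := by
  set A1 : Set S := {s ∈ A | f s = 1} with hA1def
  set B1 : Set S := {s ∈ B | f s = p} with hB1def
  have hA1 : MeasurableSet A1 := hA.inter (hf (measurableSet_singleton 1))
  have hB1 : MeasurableSet B1 := hB.inter (hf (measurableSet_singleton p))
  set A2 : Set S := A \ A1 with hA2def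
  set B2 : Set S := B \ B1 with hB2def
  have hA2 : MeasurableSet A2 := hA.diff hA1
  have hB2 : MeasurableSet B2 := hB.diff hB1
  have hA1sub : A1 ⊆ A := fun s hs => hs.1
  have hB1sub : B1 ⊆ B := fun s hs => hs.1
  -- finiteness
  have hfin : ∀ s : Set S, μ s ≠ ⊤ := fun s => (measure_lt_top μ s).ne
  -- measures split
  have hμA12 : μ A1 + μ A2 = μ A := by
    rw [hA2def, measure_diff hA1sub hA1.nullMeasurableSet (hfin A1)]
    rw [add_tsub_cancel_of_le (measure_mono hA1sub)]
  have hμB12 : μ B1 + μ B2 = μ B := by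
    rw [hB2def, measure_diff hB1sub hB1.nullMeasurableSet (hfin B1)]
    rw [add_tsub_cancel_of_le (measure_mono hB1sub)]
  -- real-valued measures
  set a0 := (μ A1).toReal with ha0
  set a2 := (μ A2).toReal with ha2
  set b1 := (μ B1).toReal with hb1
  set b2 := (μ B2).toReal with hb2
  have ha0nn : 0 ≤ a0 := ENNReal.toReal_nonneg
  have ha2nn : 0 ≤ a2 := ENNReal.toReal_nonneg
  have hb1nn : 0 ≤ b1 := ENNReal.toReal_nonneg
  have hb2nn : 0 ≤ b2 := ENNReal.toReal_nonneg
  have ha02 : a0 + a2 = 1/2 := by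
    rw [ha0, ha2, ← ENNReal.toReal_add (hfin A1) (hfin A2), hμA12, hμA]
    norm_num
  have hb12 : b1 + b2 = 1/2 := by
    rw [hb1, hb2, ← ENNReal.toReal_add (hfin B1) (hfin B2), hμB12, hμB]
    norm_num
  -- integral lower bounds
  have hint1 : 1 * (μ A1).toReal ≤ ∫ x in A1, f x ∂μ :=
    setIntegral_ge_of_const_le_real hA1 (hfin A1) (fun x _ => hf1 x) hfi.integrableOn
  have hint2 : p ^ 2 * (μ A2).toReal ≤ ∫ x in A2, f x ∂μ := by
    refine setIntegral_ge_of_const_le_real hA2 (hfin A2) (fun x hx => ?_) hfi.integrableOn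
    rcases hfA x hx.1 with h | h
    · exact absurd ⟨hx.1, h⟩ hx.2
    · exact h
  have hint3 : p * (μ B1).toReal ≤ ∫ x in B1, f x ∂μ := by
    refine setIntegral_ge_of_const_le_real hB1 (hfin B1) (fun x hx => ?_) hfi.integrableOn
    rw [hx.2]
  have hint4 : p ^ 3 * (μ B2).toReal ≤ ∫ x in B2, f x ∂μ := by
    refine setIntegral_ge_of_const_le_real hB2 (hfin B2) (fun x hx => ?_) hfi.integrableOn
    rcases hfB x hx.1 with h | h
    · exact absurd ⟨hx.1, h⟩ hx.2
    · exact h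
  -- integral splits
  have hsplitA : ∫ x in A, f x ∂μ = (∫ x in A1, f x ∂μ) + ∫ x in A2, f x ∂μ := by
    rw [← setIntegral_union (Set.disjoint_sdiff_right) hA2 hfi.integrableOn hfi.integrableOn,
      Set.union_diff_cancel hA1sub]
  have hsplitB : ∫ x in B, f x ∂μ = (∫ x in B1, f x ∂μ) + ∫ x in B2, f x ∂μ := by
    rw [← setIntegral_union (Set.disjoint_sdiff_right) hB2 hfi.integrableOn hfi.integrableOn,
      Set.union_diff_cancel hB1sub]
  have hsplit : ∫ x, f x ∂μ = (∫ x in A, f x ∂μ) + ∫ x in B, f x ∂μ := by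
    rw [← setIntegral_union hdisj hB hfi.integrableOn hfi.integrableOn, hcover,
      setIntegral_univ]
  have hkey : a0 + p ^ 2 * a2 + p * b1 + p ^ 3 * b2 ≤ p + 1 := by
    have := havg
    rw [hsplit, hsplitA, hsplitB] at this
    nlinarith [hint1, hint2, hint3, hint4]
  -- the arithmetic
  have hp1 : (0:ℝ) < 2 * p - 2 := by linarith
  have hreal : (2 * p - 3) / (2 * p - 2) ≤ a0 + b1 := by
    rw [div_le_iff₀ hp1]
    nlinarith [mul_nonneg (show (0:ℝ) ≤ p ^ 3 - p ^ 2 - p + 1 by nlinarith) hb2nn,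
      mul_nonneg (show (0:ℝ) ≤ p ^ 2 - 1 by nlinarith) ha2nn]
  calc ENNReal.ofReal ((2 * p - 3) / (2 * p - 2)) ≤ ENNReal.ofReal (a0 + b1) :=
        ENNReal.ofReal_le_ofReal hreal
    _ = μ A1 + μ B1 := by
        rw [ENNReal.ofReal_add ha0nn hb1nn, ha0, hb1,
          ENNReal.ofReal_toReal (hfin A1), ENNReal.ofReal_toReal (hfin B1)]
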